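/- arXiv:1303.5569 — 6 statements merged into one kernel-verified Lean document; each statement's English description precedes it below -/
import Mathlib

section
/- For every finite type E, every natural number l, and every sequence e : Fin l → E, one has ‖w(e)‖₁ = l if and only if e is tight, i.e., e(i) = e(j) implies i ≡ j (mod 2). -/
open scoped Classical
open Finset

noncomputable section

/-- The alternating weighting `w(e) = ∑ i, (-1)^i δ_{e i}` of a sequence
`e : Fin l → E`, where `δ_x` is the indicator function of `x`. -/
def altW {E : Type} (l : ℕ) (e : Fin l → E) : E → ℤ :=
  fun x => ∑ i : Fin l, if e i = x then (-1 : ℤ) ^ (i : ℕ) else 0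

/-- `‖w(e)‖₁ = l` iff the sequence `e` is tight, i.e. `e i = e j` implies
`i ≡ j (mod 2)`. -/
theorem stmt_1 (E : Type) [Fintype E] (l : ℕ) (e : Fin l → E) :
    (∑ x : E, |altW l e x|) = (l : ℤ) ↔
      ∀ i j : Fin l, e i = e j → (i : ℕ) % 2 = (j : ℕ) % 2 := by
  classical
  set P : E → Finset (Fin l) := fun x => univ.filter (fun i => e i = x ∧ (i:ℕ) % 2 = 0) with hP
  set N : E → Finset (Fin l) := fun x => univ.filter (fun i => e i = x ∧ (i:ℕ) % 2 ≠ 0) with hN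
  have hw : ∀ x, altW l e x = ((P x).card : ℤ) - (N x).card := by
    intro x
    unfold altW
    have key : ∀ i : Fin l,
        (if e i = x then (-1 : ℤ) ^ (i : ℕ) else 0)
          = (if i ∈ P x then (1:ℤ) else 0) + (if i ∈ N x then (-1:ℤ) else 0) := by
      intro i
      simp only [hP, hN, Finset.mem_filter, Finset.mem_univ, true_and]
      by_cases h1 : e i = x
      · rcases Nat.even_or_odd (i:ℕ) with h2 | h2
        · rw [h2.neg_one_pow]
          simp [h1, Nat.even_iff.mp h2]
        · rw [h2.neg_one_pow]
          simp [h1, Nat.odd_iff.mp h2]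
      · simp [h1]
    rw [Finset.sum_congr rfl (fun i _ => key i), Finset.sum_add_distrib]
    simp [Finset.sum_ite_mem, Finset.univ_inter, sub_eq_add_neg]
  have hcard : ∀ x, (P x).card + (N x).card = (univ.filter fun i => e i = x).card := by
    intro x
    have h1 : P x = (univ.filter fun i => e i = x).filter (fun i : Fin l => (i:ℕ) % 2 = 0) := by
      ext i; simp [hP]
    have h2 : N x = (univ.filter fun i => e i = x).filter (fun i : Fin l => ¬ (i:ℕ) % 2 = 0) := by
      ext i; simp [hN]
    rw [h1, h2]
    exact Finset.card_filter_add_card_filter_not _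
  have hl : ∑ x : E, (((P x).card : ℤ) + (N x).card) = (l : ℤ) := by
    have h := Finset.card_eq_sum_card_fiberwise
      (s := (univ : Finset (Fin l))) (t := (univ : Finset E)) (f := e)
      (fun i _ => Finset.mem_univ _)
    have : ∑ x : E, ((P x).card + (N x).card) = l := by
      simp only [hcard]
      simpa using h.symm
    exact_mod_cast congrArg (Nat.cast : ℕ → ℤ) this
  have hle : ∀ x ∈ (univ : Finset E), |altW l e x| ≤ ((P x).card : ℤ) + (N x).card := by
    intro x _
    rw [hw x]
    rcases abs_cases (((P x).card : ℤ) - (N x).card) with ⟨h, _⟩ | ⟨h, _⟩ <;> omega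
  rw [← hl, Finset.sum_eq_sum_iff_of_le hle]
  constructor
  · intro h i j hij
    by_contra hpar
    set x := e i with hx
    have hi' : (i:ℕ) % 2 = 0 ∨ (i:ℕ) % 2 = 1 := Nat.mod_two_eq_zero_or_one _
    have hj' : (j:ℕ) % 2 = 0 ∨ (j:ℕ) % 2 = 1 := Nat.mod_two_eq_zero_or_one _
    have hPc : 0 < (P x).card ∧ 0 < (N x).card := by
      constructor
      · apply Finset.card_pos.mpr
        rcases hi' with h0 | h0
        · exact ⟨i, by simp [hP, hx, h0]⟩
        · refine ⟨j, by simp [hP, ← hij, hx]; omega⟩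
      · apply Finset.card_pos.mpr
        rcases hi' with h0 | h0
        · refine ⟨j, by simp [hN, ← hij, hx]; omega⟩
        · exact ⟨i, by simp [hN, hx]; omega⟩
    have := h x (Finset.mem_univ x)
    rw [hw x] at this
    rcases abs_cases (((P x).card : ℤ) - (N x).card) with ⟨h', _⟩ | ⟨h', _⟩ <;> omega
  · intro h x _
    rw [hw x]
    have : (P x).card = 0 ∨ (N x).card = 0 := by
      by_contra hc
      push_neg at hc
      obtain ⟨i, hi⟩ := Finset.card_pos.mp (Nat.pos_of_ne_zero hc.1)
      obtain ⟨j, hj⟩ := Finset.card_pos.mp (Nat.pos_of_ne_zero hc.2)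
      simp only [hP, hN, Finset.mem_filter, Finset.mem_univ, true_and] at hi hj
      have := h i j (hi.1.trans hj.1.symm)
      omega
    rcases abs_cases (((P x).card : ℤ) - (N x).card) with ⟨h', _⟩ | ⟨h', _⟩ <;> omega
end
end

section
/- The thread flow of any sequence traversal on a sequence graph is a nonnegative integer flow: it takes nonnegative values and satisfies the balance condition at every vertex. -/
open scoped Classical
open Finset

noncomputable section

/-- A sequence graph: finite multigraph whose edges are split into segment
edges (`seg`) and bond edges, each segment edge having two distinct endpoints. -/
structure SeqGraph (V E : Type) where
  ends : E → Sym2 V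
  seg : E → Prop
  seg_not_diag : ∀ x : E, seg x → ¬ (ends x).IsDiag

namespace SeqGraph

variable {V E : Type} [Fintype V] [Fintype E]

/-- Incidence multiplicity of vertex `u` on edge `x`. -/
def mult (G : SeqGraph V E) (u : V) (x : E) : ℤ :=
  if G.ends x = s(u, u) then 2 else if u ∈ G.ends x then 1 else 0

/-- The balance condition: at each vertex the total weight of segment-edge
incidences equals the total weight of bond-edge incidences. -/
def IsFlow (G : SeqGraph V E) (f : E → ℤ) : Prop :=
  ∀ u : V,
    (∑ x : E, if G.seg x then G.mult u x * f x else 0) =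
      ∑ x : E, if G.seg x then 0 else G.mult u x * f x

/-- ℓ¹ norm of an integer weighting. -/
def l1 (f : E → ℤ) : ℤ := ∑ x : E, |f x|

/-- A (nonzero) integer flow is minimal if it admits no nontrivial ℓ¹-additive
decomposition into nonzero integer flows. -/
def MinimalFlow (G : SeqGraph V E) (f : E → ℤ) : Prop :=
  ¬ ∃ f₁ f₂ : E → ℤ, G.IsFlow f₁ ∧ G.IsFlow f₂ ∧ f₁ ≠ 0 ∧ f₂ ≠ 0 ∧
      f = f₁ + f₂ ∧ l1 f = l1 f₁ + l1 f₂

/-- A cycle traversal of length `L ≥ 1`. -/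
structure CycleTraversal (G : SeqGraph V E) where
  L : ℕ
  pos : L ≠ 0
  e : ZMod L → E
  v : ZMod L → V
  compat : ∀ i : ZMod L, G.ends (e i) = s(v (i - 1), v i)

variable {G : SeqGraph V E}

/-- Number of indices at which the traversal uses edge `x`. -/
def CycleTraversal.threadCount (t : G.CycleTraversal) (x : E) : ℕ :=
  haveI : NeZero t.L := ⟨t.pos⟩
  (Finset.univ.filter fun i : ZMod t.L => t.e i = x).card

/-- The thread flow of a traversal. -/
def CycleTraversal.threadFlow (t : G.CycleTraversal) : E → ℤ :=
  fun x => (t.threadCount x : ℤ)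

/-- A sequence traversal: even length, alternating between segment edges
(at even indices) and bond edges (at odd indices). -/
def CycleTraversal.IsSeqTraversal (t : G.CycleTraversal) : Prop :=
  Even t.L ∧ ∀ i : ZMod t.L, G.seg (t.e i) ↔ Even i.val

/-- Alternating weighting `∑ i, (-1)^i δ_{e i}` of an (even-length) traversal. -/
def CycleTraversal.altWeight (t : G.CycleTraversal) : E → ℤ :=
  haveI : NeZero t.L := ⟨t.pos⟩
  fun x => ∑ i : ZMod t.L, if t.e i = x then (-1 : ℤ) ^ i.val else 0

/-- Conjugate weighting: keep the value on segment edges, negate on bonds. -/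
def conj (G : SeqGraph V E) (g : E → ℤ) : E → ℤ :=
  fun x => if G.seg x then g x else -g x

/-- Alternating flow: the conjugate of the alternating weighting. -/
def CycleTraversal.altFlow (t : G.CycleTraversal) : E → ℤ :=
  G.conj t.altWeight

/-- Tight: equal edges only appear at indices of equal parity. -/
def CycleTraversal.Tight (t : G.CycleTraversal) : Prop :=
  ∀ i j : ZMod t.L, t.e i = t.e j → i.val % 2 = j.val % 2

/-- Synchronized: coinciding (distinct, same end vertex) indices differ by an
odd integer. -/
def CycleTraversal.Synchronized (t : G.CycleTraversal) : Prop :=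
  ∀ i j : ZMod t.L, i ≠ j → t.v i = t.v j → Odd ((i.val : ℤ) - (j.val : ℤ))

/-- Nested: no interleaved pairs of coinciding indices. -/
def CycleTraversal.Nested (t : G.CycleTraversal) : Prop :=
  ¬ ∃ i₁ i₂ j₁ j₂ : ZMod t.L,
      i₁.val < i₂.val ∧ i₂.val < j₁.val ∧ j₁.val < j₂.val ∧
      t.v i₁ = t.v j₁ ∧ t.v i₂ = t.v j₂

/-- Connectivity: any two vertices are joined by a finite walk along edges. -/
def Connected (G : SeqGraph V E) : Prop :=
  ∀ a b : V, ∃ (n : ℕ) (p : Fin (n + 1) → V), p 0 = a ∧ p (Fin.last n) = b ∧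
    ∀ i : Fin n, ∃ x : E, G.ends x = s(p i.castSucc, p i.succ)

end SeqGraph

/-- The thread flow of a sequence traversal is a nonnegative integer flow. -/
theorem stmt_4 (V E : Type) [Fintype V] [Fintype E] (G : SeqGraph V E)
    (t : G.CycleTraversal) (ht : t.IsSeqTraversal) :
    (∀ x : E, 0 ≤ t.threadFlow x) ∧ G.IsFlow t.threadFlow := by
  haveI : NeZero t.L := ⟨t.pos⟩
  obtain ⟨hL, hseg⟩ := ht
  refine ⟨fun x => Int.natCast_nonneg _, fun u => ?_⟩
  -- indicator of vertex u
  set A : ZMod t.L → ℤ := fun j => if t.v j = u then 1 else 0 with hA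
  have hmult : ∀ i : ZMod t.L, G.mult u (t.e i) = A (i - 1) + A i := by
    intro i
    have hc := t.compat i
    simp only [SeqGraph.mult, hc, hA]
    by_cases h1 : t.v (i - 1) = u <;> by_cases h2 : t.v i = u
    · simp [h1, h2]
    · have hne : ¬ s(t.v (i - 1), t.v i) = s(u, u) := by
        intro h
        rcases Sym2.eq_iff.mp h with ⟨-, h⟩ | ⟨-, h⟩ <;> exact h2 h
      rw [if_neg hne, if_pos (Sym2.mem_iff.mpr (Or.inl h1.symm)), if_pos h1, if_neg h2]
      norm_num
    · have hne : ¬ s(t.v (i - 1), t.v i) = s(u, u) := by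
        intro h
        rcases Sym2.eq_iff.mp h with ⟨h, -⟩ | ⟨h, -⟩ <;> exact h1 h
      rw [if_neg hne, if_pos (Sym2.mem_iff.mpr (Or.inr h2.symm)), if_neg h1, if_pos h2]
      norm_num
    · have hne : ¬ s(t.v (i - 1), t.v i) = s(u, u) := by
        intro h
        rcases Sym2.eq_iff.mp h with ⟨h, -⟩ | ⟨h, -⟩ <;> exact h1 h
      have hnm : ¬ u ∈ s(t.v (i - 1), t.v i) := by
        rw [Sym2.mem_iff]
        rintro (h | h)
        exacts [h1 h.symm, h2 h.symm]
      rw [if_neg hne, if_neg hnm, if_neg h1, if_neg h2]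
      norm_num
  have hflow : ∀ x, t.threadFlow x = ∑ i : ZMod t.L, if t.e i = x then (1 : ℤ) else 0 := by
    intro x
    simp only [SeqGraph.CycleTraversal.threadFlow, SeqGraph.CycleTraversal.threadCount]
    rw [Finset.card_filter]
    push_cast
    rfl
  have key : ∀ c : E → ℤ, (∑ x : E, c x * t.threadFlow x) = ∑ i : ZMod t.L, c (t.e i) := by
    intro c
    calc (∑ x : E, c x * t.threadFlow x)
        = ∑ x : E, ∑ i : ZMod t.L, if t.e i = x then c x else 0 := by
          refine Finset.sum_congr rfl fun x _ => ?_
          rw [hflow, Finset.mul_sum]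
          exact Finset.sum_congr rfl fun i _ => by split <;> simp
      _ = ∑ i : ZMod t.L, ∑ x : E, if t.e i = x then c x else 0 := Finset.sum_comm
      _ = ∑ i : ZMod t.L, c (t.e i) := by
          refine Finset.sum_congr rfl fun i _ => ?_
          rw [Finset.sum_ite_eq]
          simp
  have hparity : ∀ j : ZMod t.L, Even ((j + 1).val) ↔ ¬ Even j.val := by
    intro j
    have hL2 : 1 < t.L := by
      have hp := t.pos
      rcases hL with ⟨k, hk⟩
      omega
    have hv : (j + 1).val = (j.val + 1) % t.L := by
      rw [ZMod.val_add, ZMod.val_one_eq_one_mod]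
      rw [Nat.mod_eq_of_lt hL2]
    rw [hv, Nat.even_iff, Nat.even_iff, Nat.mod_mod_of_dvd _ hL.two_dvd]
    omega
  have shift : ∀ B : ZMod t.L → ℤ,
      (∑ i : ZMod t.L, if Even i.val then B (i - 1) else 0) =
        ∑ j : ZMod t.L, if ¬ Even j.val then B j else 0 := by
    intro B
    refine (Fintype.sum_equiv (Equiv.addRight (1 : ZMod t.L))
      (fun j => if ¬ Even j.val then B j else 0)
      (fun i => if Even i.val then B (i - 1) else 0) fun j => ?_).symm
    simp only [Equiv.coe_addRight, add_sub_cancel_right, hparity j]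
  have shift' : ∀ B : ZMod t.L → ℤ,
      (∑ i : ZMod t.L, if ¬ Even i.val then B (i - 1) else 0) =
        ∑ j : ZMod t.L, if Even j.val then B j else 0 := by
    intro B
    refine (Fintype.sum_equiv (Equiv.addRight (1 : ZMod t.L))
      (fun j => if Even j.val then B j else 0)
      (fun i => if ¬ Even i.val then B (i - 1) else 0) fun j => ?_).symm
    simp only [Equiv.coe_addRight, add_sub_cancel_right, hparity j, not_not]
  have lhs : (∑ x : E, if G.seg x then G.mult u x * t.threadFlow x else 0)
      = ∑ i : ZMod t.L, if Even i.val then A (i - 1) + A i else 0 := by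
    have := key (fun x => if G.seg x then G.mult u x else 0)
    simp only [ite_mul, zero_mul] at this
    rw [this]
    refine Finset.sum_congr rfl fun i _ => ?_
    rw [← hmult i]
    by_cases h : Even i.val
    · rw [if_pos ((hseg i).mpr h), if_pos h]
    · rw [if_neg (fun hs => h ((hseg i).mp hs)), if_neg h]
  have rhs : (∑ x : E, if G.seg x then 0 else G.mult u x * t.threadFlow x)
      = ∑ i : ZMod t.L, if ¬ Even i.val then A (i - 1) + A i else 0 := by
    have := key (fun x => if G.seg x then 0 else G.mult u x)
    simp only [ite_mul, zero_mul] at this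
    rw [this]
    refine Finset.sum_congr rfl fun i _ => ?_
    rw [← hmult i]
    by_cases h : Even i.val
    · rw [if_pos ((hseg i).mpr h), if_neg (by simpa using h)]
    · rw [if_neg (fun hs => h ((hseg i).mp hs)), if_pos h]
  rw [lhs, rhs]
  have e1 : (∑ i : ZMod t.L, if Even i.val then A (i - 1) + A i else 0)
      = (∑ i : ZMod t.L, if Even i.val then A (i - 1) else 0)
        + ∑ i : ZMod t.L, if Even i.val then A i else 0 := by
    rw [← Finset.sum_add_distrib]
    exact Finset.sum_congr rfl fun i _ => by split <;> simp
  have e2 : (∑ i : ZMod t.L, if ¬ Even i.val then A (i - 1) + A i else 0)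
      = (∑ i : ZMod t.L, if ¬ Even i.val then A (i - 1) else 0)
        + ∑ i : ZMod t.L, if ¬ Even i.val then A i else 0 := by
    rw [← Finset.sum_add_distrib]
    exact Finset.sum_congr rfl fun i _ => by split <;> simp
  rw [e1, e2, shift A, shift' A, add_comm]
end
end

section
/- On a sequence graph, every integer flow f with f(x) ≥ 0 for all edges x can be written as a finite sum of thread flows of sequence traversals. -/
open scoped Classical
open Finset

noncomputable section

section Aux

namespace SeqGraph

variable {V E : Type} [Fintype V] [Fintype E] {G : SeqGraph V E}

set_option linter.unusedSectionVars false in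
lemma mult_nonneg (u : V) (x : E) : 0 ≤ G.mult u x := by
  unfold mult; split_ifs <;> norm_num

set_option linter.unusedSectionVars false in
lemma mult_eq_of_ends {a b : V} {x : E} (h : G.ends x = s(a, b)) (u : V) :
    G.mult u x = (if a = u then 1 else 0) + (if b = u then 1 else 0) := by
  unfold mult
  rw [h]
  by_cases ha : a = u
  · by_cases hb : b = u
    · simp [Sym2.eq_iff, Sym2.mem_iff, ha, hb]
    · simp [Sym2.eq_iff, Sym2.mem_iff, ha, hb]
  · by_cases hb : b = u
    · simp [Sym2.eq_iff, Sym2.mem_iff, ha, hb]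
    · simp only [Sym2.eq_iff, Sym2.mem_iff]
      rw [if_neg (by tauto), if_neg (by tauto), if_neg ha, if_neg hb]
      norm_num

set_option linter.unusedSectionVars false in
lemma mem_of_mult_pos {u : V} {x : E} (h : 0 < G.mult u x) : u ∈ G.ends x := by
  unfold mult at h
  split_ifs at h with h1 h2
  · rw [h1]; simp
  · exact h2
  · exact absurd h (lt_irrefl 0)

set_option linter.unusedSectionVars false in
lemma mult_pos_of_mem {u : V} {x : E} (h : u ∈ G.ends x) : 0 < G.mult u x := by
  unfold mult
  split_ifs with h1 h2 <;> first | norm_num | exact absurd h h2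

lemma sum_mul_count {ι : Type} (s : Finset ι) (e : ι → E) (h : E → ℤ) :
    ∑ x : E, h x * (∑ i ∈ s, if e i = x then 1 else 0) = ∑ i ∈ s, h (e i) := by
  simp_rw [Finset.mul_sum, mul_ite, mul_one, mul_zero]
  rw [Finset.sum_comm]
  refine Finset.sum_congr rfl fun i _ => ?_
  simp

lemma exists_of_sum_pos {h : E → ℤ} (hp : 0 < ∑ x : E, h x) : ∃ x, 0 < h x := by
  by_contra hc; push_neg at hc
  exact absurd (Finset.sum_nonpos fun x _ => hc x) (not_le.mpr hp)

end SeqGraph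

end Aux
section Walk

set_option linter.unusedSectionVars false

namespace SeqGraph

variable {V E : Type} [Fintype V] [Fintype E] {G : SeqGraph V E}

/-- A finite alternating walk of length `k` respecting capacities `f`. -/
structure AltWalk (G : SeqGraph V E) (f : E → ℤ) (k : ℕ) where
  vv : ℕ → V
  ee : ℕ → E
  compat : ∀ i < k, G.ends (ee i) = s(vv i, vv (i + 1))
  alt : ∀ i < k, G.seg (ee i) ↔ Even i
  cap : ∀ x : E, (∑ i ∈ Finset.range k, if ee i = x then (1 : ℤ) else 0) ≤ f x

namespace AltWalk

variable {f : E → ℤ} {k : ℕ}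

def use (w : AltWalk G f k) (x : E) : ℤ :=
  ∑ i ∈ Finset.range k, if w.ee i = x then (1 : ℤ) else 0

lemma use_le (w : AltWalk G f k) (x : E) : w.use x ≤ f x := w.cap x

lemma use_nonneg (w : AltWalk G f k) (x : E) : 0 ≤ w.use x :=
  Finset.sum_nonneg fun i _ => by split_ifs <;> norm_num

lemma length_le (w : AltWalk G f k) : (k : ℤ) ≤ ∑ x : E, f x := by
  have h1 : (k : ℤ) = ∑ x : E, w.use x := by
    unfold use
    rw [Finset.sum_comm]
    simp
  rw [h1]
  exact Finset.sum_le_sum fun x _ => w.use_le x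

lemma imbalance (w : AltWalk G f k) (u : V) :
    (∑ x : E, if G.seg x then G.mult u x * w.use x else 0)
      - (∑ x : E, if G.seg x then 0 else G.mult u x * w.use x)
    = (if w.vv 0 = u then 1 else 0)
      - (-1 : ℤ) ^ k * (if w.vv k = u then 1 else 0) := by
  have key : ∀ x : E,
      (if G.seg x then G.mult u x * w.use x else 0)
        - (if G.seg x then 0 else G.mult u x * w.use x)
      = (if G.seg x then G.mult u x else -G.mult u x) * w.use x := by
    intro x; split_ifs <;> ring
  rw [← Finset.sum_sub_distrib]
  simp_rw [key]
  unfold use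
  rw [sum_mul_count (Finset.range k) w.ee _]
  have step : ∀ i ∈ Finset.range k,
      (if G.seg (w.ee i) then G.mult u (w.ee i) else -G.mult u (w.ee i))
      = ((-1 : ℤ) ^ i * (if w.vv i = u then 1 else 0))
        - ((-1 : ℤ) ^ (i + 1) * (if w.vv (i + 1) = u then 1 else 0)) := by
    intro i hi
    rw [Finset.mem_range] at hi
    rw [mult_eq_of_ends (w.compat i hi)]
    rw [pow_succ]
    by_cases he : Even i
    · rw [if_pos ((w.alt i hi).2 he), he.neg_one_pow]; ring
    · rw [if_neg (fun hs => he ((w.alt i hi).1 hs)),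
        (Nat.not_even_iff_odd.mp he).neg_one_pow]
      ring
  rw [Finset.sum_congr rfl step, Finset.sum_range_sub'
    (fun i => (-1 : ℤ) ^ i * (if w.vv i = u then 1 else 0))]
  norm_num

end AltWalk

end SeqGraph

end Walk
section Walk2

set_option linter.unusedSectionVars false

namespace SeqGraph

variable {V E : Type} [Fintype V] [Fintype E] {G : SeqGraph V E}

namespace AltWalk

variable {f : E → ℤ} {k : ℕ}

lemma exists_next (hf : G.IsFlow f) (w : AltWalk G f k)
    (hk : 1 ≤ k) (hnc : ¬ (Even k ∧ w.vv k = w.vv 0)) :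
    ∃ x : E, (G.seg x ↔ Even k) ∧ w.vv k ∈ G.ends x ∧ w.use x < f x := by
  classical
  set u := w.vv k with hu
  set g : E → ℤ := fun x => f x - w.use x with hg
  have hgpos : ∀ x, 0 ≤ g x := fun x => by
    simp only [hg, sub_nonneg]; exact w.use_le x
  have himb := w.imbalance u
  have hfu := hf u
  have hA : (∑ x : E, if G.seg x then G.mult u x * g x else 0)
      = (∑ x : E, if G.seg x then G.mult u x * f x else 0)
        - (∑ x : E, if G.seg x then G.mult u x * w.use x else 0) := by
    rw [← Finset.sum_sub_distrib]
    refine Finset.sum_congr rfl fun x _ => ?_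
    simp only [hg]; split_ifs <;> ring
  have hB : (∑ x : E, if G.seg x then 0 else G.mult u x * g x)
      = (∑ x : E, if G.seg x then 0 else G.mult u x * f x)
        - (∑ x : E, if G.seg x then 0 else G.mult u x * w.use x) := by
    rw [← Finset.sum_sub_distrib]
    refine Finset.sum_congr rfl fun x _ => ?_
    simp only [hg]; split_ifs <;> ring
  have hck : (if w.vv k = u then (1 : ℤ) else 0) = 1 := if_pos rfl
  have hdiff : (∑ x : E, if G.seg x then G.mult u x * g x else 0)
      - (∑ x : E, if G.seg x then 0 else G.mult u x * g x)
      = (-1 : ℤ) ^ k - (if w.vv 0 = u then 1 else 0) := by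
    rw [hA, hB]
    rw [hck] at himb
    linarith [himb, hfu]
  have hApos : 0 ≤ ∑ x : E, if G.seg x then G.mult u x * g x else 0 :=
    Finset.sum_nonneg fun x _ => by
      split_ifs
      · exact mul_nonneg (mult_nonneg u x) (hgpos x)
      · exact le_refl 0
  have hBpos : 0 ≤ ∑ x : E, if G.seg x then 0 else G.mult u x * g x :=
    Finset.sum_nonneg fun x _ => by
      split_ifs
      · exact le_refl 0
      · exact mul_nonneg (mult_nonneg u x) (hgpos x)
  by_cases hek : Even k
  · have h0 : ¬ (w.vv 0 = u) := fun h => hnc ⟨hek, hu.symm.trans h.symm⟩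
    rw [if_neg h0, hek.neg_one_pow] at hdiff
    obtain ⟨x, hx⟩ := exists_of_sum_pos
      (show 0 < ∑ x : E, if G.seg x then G.mult u x * g x else 0 by linarith)
    have hseg : G.seg x := by
      by_contra hs; rw [if_neg hs] at hx; exact lt_irrefl 0 hx
    rw [if_pos hseg] at hx
    have hm : 0 < G.mult u x := by
      rcases (mult_nonneg (G := G) u x).lt_or_eq with h | h
      · exact h
      · rw [← h, zero_mul] at hx; exact absurd hx (lt_irrefl 0)
    have hgx : 0 < g x := by
      rcases (hgpos x).lt_or_eq with h | h
      · exact h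
      · rw [← h, mul_zero] at hx; exact absurd hx (lt_irrefl 0)
    refine ⟨x, iff_of_true hseg hek, mem_of_mult_pos hm, ?_⟩
    simp only [hg] at hgx; linarith
  · have hng : (-1 : ℤ) ^ k = -1 := (Nat.not_even_iff_odd.mp hek).neg_one_pow
    have hc0 : 0 ≤ (if w.vv 0 = u then (1 : ℤ) else 0) := by split_ifs <;> norm_num
    rw [hng] at hdiff
    obtain ⟨x, hx⟩ := exists_of_sum_pos
      (show 0 < ∑ x : E, if G.seg x then 0 else G.mult u x * g x by linarith)
    have hbond : ¬ G.seg x := by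
      intro hs; rw [if_pos hs] at hx; exact lt_irrefl 0 hx
    rw [if_neg hbond] at hx
    have hm : 0 < G.mult u x := by
      rcases (mult_nonneg (G := G) u x).lt_or_eq with h | h
      · exact h
      · rw [← h, zero_mul] at hx; exact absurd hx (lt_irrefl 0)
    have hgx : 0 < g x := by
      rcases (hgpos x).lt_or_eq with h | h
      · exact h
      · rw [← h, mul_zero] at hx; exact absurd hx (lt_irrefl 0)
    refine ⟨x, iff_of_false hbond hek, mem_of_mult_pos hm, ?_⟩
    simp only [hg] at hgx; linarith

lemma extend (hf : G.IsFlow f) (w : AltWalk G f k)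
    (hk : 1 ≤ k) (hnc : ¬ (Even k ∧ w.vv k = w.vv 0)) :
    Nonempty (AltWalk G f (k + 1)) := by
  classical
  obtain ⟨x, hxseg, hxmem, hxcap⟩ := w.exists_next hf hk hnc
  obtain ⟨b, hb⟩ := Sym2.mem_iff_exists.mp hxmem
  refine ⟨⟨Function.update w.vv (k + 1) b, Function.update w.ee k x, ?_, ?_, ?_⟩⟩
  · intro i hi
    rcases Nat.lt_succ_iff_lt_or_eq.mp hi with h | h
    · rw [Function.update_of_ne (show i ≠ k by omega),
        Function.update_of_ne (show i ≠ k + 1 by omega),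
        Function.update_of_ne (show i + 1 ≠ k + 1 by omega)]
      exact w.compat i h
    · rw [h]
      rw [Function.update_self, Function.update_self,
        Function.update_of_ne (show k ≠ k + 1 by omega)]
      exact hb
  · intro i hi
    rcases Nat.lt_succ_iff_lt_or_eq.mp hi with h | h
    · rw [Function.update_of_ne (show i ≠ k by omega)]
      exact w.alt i h
    · rw [h]
      rw [Function.update_self]
      exact hxseg
  · intro x'
    rw [Finset.sum_range_succ]
    have h1 : (∑ i ∈ Finset.range k,
        if Function.update w.ee k x i = x' then (1 : ℤ) else 0) = w.use x' :=
      Finset.sum_congr rfl fun i hi => by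
        rw [Function.update_of_ne (show i ≠ k by
          have := Finset.mem_range.mp hi; omega)]
    rw [h1, Function.update_self]
    by_cases hx' : x = x'
    · subst hx'
      rw [if_pos rfl]
      linarith [hxcap]
    · rw [if_neg hx']
      simpa using w.use_le x'

end AltWalk

end SeqGraph

end Walk2
section Walk3

set_option linter.unusedSectionVars false

namespace SeqGraph

variable {V E : Type} [Fintype V] [Fintype E] {G : SeqGraph V E}

variable {f : E → ℤ}

lemma exists_seg_edge (hf : G.IsFlow f) (hpos : ∀ x, 0 ≤ f x) (hne : f ≠ 0) :
    ∃ x : E, G.seg x ∧ 0 < f x := by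
  classical
  have hx : ∃ x, 0 < f x := by
    by_contra h; push_neg at h
    exact hne (funext fun x => le_antisymm (h x) (hpos x))
  obtain ⟨x, hx⟩ := hx
  by_cases hs : G.seg x
  · exact ⟨x, hs, hx⟩
  · obtain ⟨a, b, hab⟩ : ∃ a b, G.ends x = s(a, b) :=
      Sym2.ind (fun a b => ⟨a, b, rfl⟩) (G.ends x)
    have hamem : a ∈ G.ends x := by rw [hab]; exact Sym2.mem_mk_left a b
    have hbondpos : 0 < ∑ x' : E, if G.seg x' then 0 else G.mult a x' * f x' := by
      refine Finset.sum_pos' (fun x' _ => ?_) ⟨x, Finset.mem_univ x, ?_⟩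
      · split_ifs
        · exact le_refl 0
        · exact mul_nonneg (mult_nonneg a x') (hpos x')
      · rw [if_neg hs]
        exact mul_pos (mult_pos_of_mem hamem) hx
    rw [← hf a] at hbondpos
    obtain ⟨y, hy⟩ := exists_of_sum_pos hbondpos
    have hsy : G.seg y := by
      by_contra h; rw [if_neg h] at hy; exact lt_irrefl 0 hy
    rw [if_pos hsy] at hy
    have hfy : 0 < f y := by
      rcases (hpos y).lt_or_eq with h | h
      · exact h
      · rw [← h, mul_zero] at hy; exact absurd hy (lt_irrefl 0)
    exact ⟨y, hsy, hfy⟩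

lemma exists_walk_one (hf : G.IsFlow f) (hpos : ∀ x, 0 ≤ f x) (hne : f ≠ 0) :
    Nonempty (AltWalk G f 1) := by
  classical
  obtain ⟨x0, hs0, hf0⟩ := exists_seg_edge hf hpos hne
  obtain ⟨a, b, hab⟩ : ∃ a b, G.ends x0 = s(a, b) :=
    Sym2.ind (fun a b => ⟨a, b, rfl⟩) (G.ends x0)
  refine ⟨⟨fun i => if i = 0 then a else b, fun _ => x0, ?_, ?_, ?_⟩⟩
  · intro i hi
    have : i = 0 := by omega
    subst this
    norm_num
    exact hab
  · intro i hi
    have : i = 0 := by omega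
    subst this
    exact iff_of_true hs0 (Even.zero)
  · intro x'
    rw [Finset.sum_range_one]
    split_ifs with h
    · rw [← h]; linarith [hf0]
    · exact hpos x'

lemma exists_closed (hf : G.IsFlow f) (hpos : ∀ x, 0 ≤ f x) :
    ∀ m k : ℕ, 1 ≤ k → (∑ x : E, f x).toNat + 1 ≤ m + k → AltWalk G f k →
    ∃ k' : ℕ, 2 ≤ k' ∧ Even k' ∧ ∃ w : AltWalk G f k', w.vv k' = w.vv 0 := by
  intro m
  induction m with
  | zero =>
    intro k hk hb w
    exfalso
    have h1 := w.length_le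
    have h2 : (0 : ℤ) ≤ ∑ x : E, f x :=
      Finset.sum_nonneg fun x _ => hpos x
    omega
  | succ m ih =>
    intro k hk hb w
    by_cases hc : Even k ∧ w.vv k = w.vv 0
    · have hk2 : 2 ≤ k := by
        rcases hc.1 with ⟨j, hj⟩; omega
      exact ⟨k, hk2, hc.1, w, hc.2⟩
    · obtain ⟨w'⟩ := w.extend hf hk hc
      exact ih (k + 1) (by omega) (by omega) w'

lemma zmod_sub_one_val {k : ℕ} [NeZero k] (hk : 2 ≤ k) (i : ZMod k) :
    (i - 1).val + 1 = if i.val = 0 then k else i.val := by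
  have h1 : ((k - 1 : ℕ) : ZMod k) = -1 := by
    have h2 : ((k : ℕ) : ZMod k) = 0 := ZMod.natCast_self k
    rw [Nat.cast_sub (by omega : 1 ≤ k), h2, Nat.cast_one, zero_sub]
  have h3 : i - 1 = i + ((k - 1 : ℕ) : ZMod k) := by rw [h1]; ring
  have h4 : ((k - 1 : ℕ) : ZMod k).val = k - 1 := by
    rw [ZMod.val_natCast, Nat.mod_eq_of_lt (by omega)]
  rw [h3, ZMod.val_add, h4]
  have hlt := ZMod.val_lt i
  by_cases h0 : i.val = 0
  · rw [if_pos h0, h0, Nat.zero_add, Nat.mod_eq_of_lt (by omega)]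
    omega
  · rw [if_neg h0]
    rw [show i.val + (k - 1) = (i.val - 1) + k by omega, Nat.add_mod_right,
      Nat.mod_eq_of_lt (by omega)]
    omega

lemma zmod_add_one_val {k : ℕ} [NeZero k] (hk : 2 ≤ k) (j : ZMod k) :
    (j + 1).val = if j.val = k - 1 then 0 else j.val + 1 := by
  haveI : Fact (1 < k) := ⟨by omega⟩
  rw [ZMod.val_add, ZMod.val_one]
  have hlt := ZMod.val_lt j
  by_cases h0 : j.val = k - 1
  · rw [if_pos h0, h0, show k - 1 + 1 = k by omega, Nat.mod_self]
  · rw [if_neg h0, Nat.mod_eq_of_lt (by omega)]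

lemma zmod_parity_flip {L : ℕ} [NeZero L] (hL : Even L) (j : ZMod L) :
    Even ((j + 1).val) ↔ ¬ Even j.val := by
  have h2 : 2 ≤ L := by
    have hLpos := Nat.pos_of_ne_zero (NeZero.ne L)
    rcases hL with ⟨m, hm⟩; omega
  have hLmod : L % 2 = 0 := Nat.even_iff.mp hL
  have hlt := ZMod.val_lt j
  rw [zmod_add_one_val h2 j]
  simp only [Nat.even_iff]
  split_ifs with h
  · omega
  · omega

lemma zmod_sum_eq_range {k : ℕ} [NeZero k] (F : ℕ → ℤ) :
    ∑ i : ZMod k, F i.val = ∑ m ∈ Finset.range k, F m := by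
  refine Finset.sum_nbij' (fun i => i.val) (fun m => (m : ZMod k)) ?_ ?_ ?_ ?_ ?_
  · intro i _; exact Finset.mem_range.mpr (ZMod.val_lt i)
  · intro m _; exact Finset.mem_univ _
  · intro i _; exact (ZMod.natCast_rightInverse i)
  · intro m hm; exact ZMod.val_natCast_of_lt (Finset.mem_range.mp hm)
  · intro i _; rfl

end SeqGraph

end Walk3
section Trav

set_option linter.unusedSectionVars false

namespace SeqGraph

variable {V E : Type} [Fintype V] [Fintype E] {G : SeqGraph V E}

lemma zmod_shift_even {L : ℕ} [NeZero L] (hL : Even L) (c : ZMod L → ℤ) :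
    ∑ i : ZMod L, (if Even i.val then c (i - 1) else 0)
      = ∑ i : ZMod L, (if Even i.val then 0 else c i) := by
  rw [← Equiv.sum_comp (Equiv.addRight (1 : ZMod L))
    (fun i => if Even i.val then c (i - 1) else 0)]
  refine Finset.sum_congr rfl fun j _ => ?_
  have hval := zmod_parity_flip hL j
  simp only [Equiv.coe_addRight, add_sub_cancel_right]
  by_cases h : Even j.val
  · rw [if_neg (fun h' => (hval.mp h') h), if_pos h]
  · rw [if_pos (hval.mpr h), if_neg h]

lemma zmod_shift_odd {L : ℕ} [NeZero L] (hL : Even L) (c : ZMod L → ℤ) :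
    ∑ i : ZMod L, (if Even i.val then 0 else c (i - 1))
      = ∑ i : ZMod L, (if Even i.val then c i else 0) := by
  rw [← Equiv.sum_comp (Equiv.addRight (1 : ZMod L))
    (fun i => if Even i.val then 0 else c (i - 1))]
  refine Finset.sum_congr rfl fun j _ => ?_
  have hval := zmod_parity_flip hL j
  simp only [Equiv.coe_addRight, add_sub_cancel_right]
  by_cases h : Even j.val
  · rw [if_neg (fun h' => (hval.mp h') h), if_pos h]
  · rw [if_pos (hval.mpr h), if_neg h]

namespace CycleTraversal

lemma threadFlow_eq_sum (t : G.CycleTraversal) (x : E) :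
    haveI : NeZero t.L := ⟨t.pos⟩
    t.threadFlow x = ∑ i : ZMod t.L, if t.e i = x then (1 : ℤ) else 0 := by
  haveI : NeZero t.L := ⟨t.pos⟩
  unfold threadFlow threadCount
  rw [Finset.card_filter]
  push_cast
  rfl

lemma threadFlow_nonneg (t : G.CycleTraversal) (x : E) : 0 ≤ t.threadFlow x := by
  unfold threadFlow
  positivity

lemma sum_threadFlow (t : G.CycleTraversal) :
    ∑ x : E, t.threadFlow x = (t.L : ℤ) := by
  haveI : NeZero t.L := ⟨t.pos⟩
  have h1 : ∀ x : E, t.threadFlow x = ∑ i : ZMod t.L, if t.e i = x then (1 : ℤ) else 0 :=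
    t.threadFlow_eq_sum
  simp_rw [h1]
  rw [Finset.sum_comm]
  simp [Finset.card_univ, ZMod.card]

lemma isFlow_threadFlow (t : G.CycleTraversal) (ht : t.IsSeqTraversal) :
    G.IsFlow t.threadFlow := by
  haveI : NeZero t.L := ⟨t.pos⟩
  intro u
  have htf : ∀ x : E, t.threadFlow x = ∑ i : ZMod t.L, if t.e i = x then (1 : ℤ) else 0 :=
    t.threadFlow_eq_sum
  set c : ZMod t.L → ℤ := fun j => if t.v j = u then 1 else 0 with hc
  have hL : (∑ x : E, if G.seg x then G.mult u x * t.threadFlow x else 0)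
      = ∑ i : ZMod t.L, (if Even i.val then (c (i - 1) + c i) else 0) := by
    have key : ∀ x : E, (if G.seg x then G.mult u x * t.threadFlow x else 0)
        = (if G.seg x then G.mult u x else 0) * t.threadFlow x := by
      intro x; split_ifs <;> ring
    simp_rw [key, htf]
    rw [sum_mul_count (Finset.univ : Finset (ZMod t.L)) t.e _]
    refine Finset.sum_congr rfl fun i _ => ?_
    by_cases he : Even i.val
    · rw [if_pos ((ht.2 i).mpr he), if_pos he,
        mult_eq_of_ends (t.compat i) u]
    · rw [if_neg (fun hs => he ((ht.2 i).mp hs)), if_neg he]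
  have hR : (∑ x : E, if G.seg x then 0 else G.mult u x * t.threadFlow x)
      = ∑ i : ZMod t.L, (if Even i.val then 0 else (c (i - 1) + c i)) := by
    have key : ∀ x : E, (if G.seg x then 0 else G.mult u x * t.threadFlow x)
        = (if G.seg x then 0 else G.mult u x) * t.threadFlow x := by
      intro x; split_ifs <;> ring
    simp_rw [key, htf]
    rw [sum_mul_count (Finset.univ : Finset (ZMod t.L)) t.e _]
    refine Finset.sum_congr rfl fun i _ => ?_
    by_cases he : Even i.val
    · rw [if_pos ((ht.2 i).mpr he), if_pos he]
    · rw [if_neg (fun hs => he ((ht.2 i).mp hs)), if_neg he,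
        mult_eq_of_ends (t.compat i) u]
  rw [hL, hR]
  have hsplit1 : ∑ i : ZMod t.L, (if Even i.val then (c (i - 1) + c i) else 0)
      = (∑ i : ZMod t.L, if Even i.val then c (i - 1) else 0)
        + ∑ i : ZMod t.L, (if Even i.val then c i else 0) := by
    rw [← Finset.sum_add_distrib]
    refine Finset.sum_congr rfl fun i _ => ?_
    split_ifs <;> simp
  have hsplit2 : ∑ i : ZMod t.L, (if Even i.val then 0 else (c (i - 1) + c i))
      = (∑ i : ZMod t.L, if Even i.val then 0 else c (i - 1))
        + ∑ i : ZMod t.L, (if Even i.val then 0 else c i) := by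
    rw [← Finset.sum_add_distrib]
    refine Finset.sum_congr rfl fun i _ => ?_
    split_ifs <;> simp
  rw [hsplit1, hsplit2, zmod_shift_even ht.1 c, zmod_shift_odd ht.1 c]
  ring

end CycleTraversal

lemma exists_traversal {f : E → ℤ} (hf : G.IsFlow f) (hpos : ∀ x, 0 ≤ f x) (hne : f ≠ 0) :
    ∃ t : G.CycleTraversal, t.IsSeqTraversal ∧ ∀ x, t.threadFlow x ≤ f x := by
  obtain ⟨w1⟩ := exists_walk_one hf hpos hne
  obtain ⟨k, hk2, hkeven, w, hclosed⟩ :=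
    exists_closed hf hpos ((∑ x : E, f x).toNat) 1 le_rfl (by omega) w1
  haveI : NeZero k := ⟨by omega⟩
  refine ⟨⟨k, by omega, fun i => w.ee i.val, fun i => w.vv (i.val + 1), ?_⟩,
    ⟨hkeven, fun i => w.alt i.val (ZMod.val_lt i)⟩, fun x => ?_⟩
  · intro i
    have hcompat := w.compat i.val (ZMod.val_lt i)
    have hvv : w.vv ((i - 1).val + 1) = w.vv i.val := by
      rw [zmod_sub_one_val hk2 i]
      split_ifs with h0
      · rw [hclosed, h0]
      · rfl
    show G.ends (w.ee i.val) = s(w.vv ((i - 1).val + 1), w.vv (i.val + 1))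
    rw [hcompat, hvv]
  · show CycleTraversal.threadFlow _ x ≤ f x
    rw [CycleTraversal.threadFlow_eq_sum]
    have h2 : (∑ i : ZMod k, if w.ee i.val = x then (1 : ℤ) else 0) ≤ f x := by
      rw [zmod_sum_eq_range (fun m => if w.ee m = x then (1 : ℤ) else 0)]
      exact w.cap x
    exact h2

end SeqGraph

end Trav

/-- Every nonnegative integer flow is a finite sum of thread flows of
sequence traversals. -/
theorem stmt_5 (V E : Type) [Fintype V] [Fintype E] (G : SeqGraph V E)
    (f : E → ℤ) (hf : G.IsFlow f) (hpos : ∀ x : E, 0 ≤ f x) :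
    ∃ (n : ℕ) (T : Fin n → G.CycleTraversal),
      (∀ k : Fin n, (T k).IsSeqTraversal) ∧
      f = ∑ k : Fin n, (T k).threadFlow := by
  suffices h : ∀ N : ℕ, ∀ f : E → ℤ, G.IsFlow f → (∀ x, 0 ≤ f x) →
      (∑ x : E, f x).toNat ≤ N →
      ∃ (n : ℕ) (T : Fin n → G.CycleTraversal),
        (∀ k : Fin n, (T k).IsSeqTraversal) ∧
        f = ∑ k : Fin n, (T k).threadFlow by
    exact h _ f hf hpos le_rfl
  intro N
  induction N with
  | zero =>
    intro f hf hpos hN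
    have hzero : f = 0 := by
      have hsum : ∑ x : E, f x = 0 := by
        have h1 : (0 : ℤ) ≤ ∑ x : E, f x := Finset.sum_nonneg fun x _ => hpos x
        omega
      funext x
      exact (Finset.sum_eq_zero_iff_of_nonneg fun x _ => hpos x).mp hsum x
        (Finset.mem_univ x)
    exact ⟨0, Fin.elim0, fun k => k.elim0, by simp [hzero]⟩
  | succ N ih =>
    intro f hf hpos hN
    by_cases h0 : f = 0
    · exact ⟨0, Fin.elim0, fun k => k.elim0, by simp [h0]⟩
    · obtain ⟨t, hts, hle⟩ := SeqGraph.exists_traversal hf hpos h0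
      set f' : E → ℤ := f - t.threadFlow with hf'
      have hflow' : G.IsFlow f' := by
        intro u
        have h1 := hf u
        have h2 := t.isFlow_threadFlow hts u
        have hA : (∑ x : E, if G.seg x then G.mult u x * f' x else 0)
            = (∑ x : E, if G.seg x then G.mult u x * f x else 0)
              - ∑ x : E, (if G.seg x then G.mult u x * t.threadFlow x else 0) := by
          rw [← Finset.sum_sub_distrib]
          refine Finset.sum_congr rfl fun x _ => ?_
          simp only [hf', Pi.sub_apply]
          split_ifs <;> ring
        have hB : (∑ x : E, if G.seg x then 0 else G.mult u x * f' x)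
            = (∑ x : E, if G.seg x then 0 else G.mult u x * f x)
              - ∑ x : E, (if G.seg x then 0 else G.mult u x * t.threadFlow x) := by
          rw [← Finset.sum_sub_distrib]
          refine Finset.sum_congr rfl fun x _ => ?_
          simp only [hf', Pi.sub_apply]
          split_ifs <;> ring
        rw [hA, hB, h1, h2]
      have hpos' : ∀ x, 0 ≤ f' x := fun x => by
        simp only [hf', Pi.sub_apply, sub_nonneg]
        exact hle x
      have hsum' : (∑ x : E, f' x).toNat ≤ N := by
        have hLpos : 1 ≤ (t.L : ℤ) := by exact_mod_cast Nat.one_le_iff_ne_zero.mpr t.pos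
        have hsub : ∑ x : E, f' x = (∑ x : E, f x) - t.L := by
          simp only [hf', Pi.sub_apply]
          rw [Finset.sum_sub_distrib, t.sum_threadFlow]
        have hge : (0 : ℤ) ≤ ∑ x : E, f' x := Finset.sum_nonneg fun x _ => hpos' x
        have hge2 : (0 : ℤ) ≤ ∑ x : E, f x := Finset.sum_nonneg fun x _ => hpos x
        omega
      obtain ⟨n, T, hT, hsum⟩ := ih f' hflow' hpos' hsum'
      refine ⟨n + 1, Fin.cons t T, ?_, ?_⟩
      · intro k
        refine Fin.cases ?_ ?_ k
        · exact hts
        · exact hT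
      · rw [Fin.sum_univ_succ]
        simp only [Fin.cons_zero, Fin.cons_succ]
        rw [← hsum]
        funext x
        simp [hf']
end
end

section
/- A synchronized and nested even-length cycle traversal on a sequence graph uses each edge at most twice: for every edge x, the number of indices i with e(i) = x is at most 2; consequently its alternating flow f satisfies |f(x)| ≤ 2 for every edge x. -/
open scoped Classical
open Finset

noncomputable section

/-- A synchronized and nested even-length cycle traversal uses every edge at
most twice; consequently its alternating flow is bounded by 2 in absolute
value on every edge. -/
theorem stmt_12 (V E : Type) [Fintype V] [Fintype E] (G : SeqGraph V E)
    (t : G.CycleTraversal) (hL : Even t.L)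
    (hsync : t.Synchronized) (hnest : t.Nested) :
    (∀ x : E, t.threadCount x ≤ 2) ∧ ∀ x : E, |t.altFlow x| ≤ 2 := by
  haveI : NeZero t.L := ⟨t.pos⟩
  have hL2 : 2 ≤ t.L := by
    obtain ⟨k, hk⟩ := hL
    have := t.pos
    omega
  have hval : ∀ i : ZMod t.L,
      (i.val = (i - 1).val + 1) ∨ ((i - 1).val + 1 = t.L ∧ i.val = 0) := by
    intro i
    haveI : Fact (1 < t.L) := ⟨hL2⟩
    have h : i.val = ((i - 1).val + 1) % t.L := by
      conv_lhs => rw [show i = (i - 1) + 1 by ring]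
      rw [ZMod.val_add, ZMod.val_one]
    have hlt := ZMod.val_lt (i - 1)
    rcases Nat.lt_or_ge ((i - 1).val + 1) t.L with h' | h'
    · left; rw [h, Nat.mod_eq_of_lt h']
    · right
      have he : (i - 1).val + 1 = t.L := by omega
      exact ⟨he, by rw [h, he, Nat.mod_self]⟩
  have hinj : ∀ i j : ZMod t.L, i.val = j.val → i = j := by
    intro i j h
    exact ZMod.val_injective t.L h
  have hpar : ∀ i j : ZMod t.L, i ≠ j → t.v i = t.v j → i.val % 2 ≠ j.val % 2 := by
    intro i j hij hv
    obtain ⟨k, hk⟩ := hsync i j hij hv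
    omega
  have key : ∀ p q : ZMod t.L, p.val < q.val → t.v p = t.v q →
      t.v (p - 1) = t.v (q - 1) → t.v (p - 1) ≠ t.v p → False := by
    intro p q hlt h1 h2 hnd
    have hPlt := ZMod.val_lt p
    have hQlt := ZMod.val_lt q
    have hAlt := ZMod.val_lt (p - 1)
    have hBlt := ZMod.val_lt (q - 1)
    have hpq1 : p.val ≠ (q - 1).val := by
      intro h
      exact hnd (h2.trans (congrArg t.v (hinj _ _ h)).symm)
    have hq1 : q.val ≠ (p - 1).val := by
      intro h
      exact hnd (h1.trans (congrArg t.v (hinj _ _ h))).symm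
    have hAB : (p - 1).val ≠ (q - 1).val := by
      intro h
      have hpq : p = q := sub_left_inj.mp (hinj _ _ h)
      have := congrArg ZMod.val hpq
      omega
    rcases hval p with hPA | ⟨hPA, hP0⟩
    · rcases hval q with hQB | ⟨hQB, hQ0⟩
      · exact hnest ⟨p - 1, p, q - 1, q, by omega, by omega, by omega, h2, h1⟩
      · omega
    · rcases hval q with hQB | ⟨hQB, hQ0⟩
      · exact hnest ⟨p, q - 1, q, p - 1, by omega, by omega, by omega, h1, h2.symm⟩
      · omega
  have samekill : ∀ p q : ZMod t.L, p ≠ q → t.v p = t.v q →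
      t.v (p - 1) = t.v (q - 1) → t.v (p - 1) ≠ t.v p → False := by
    intro p q hne h1 h2 hnd
    have hv : p.val ≠ q.val := fun h => hne (hinj _ _ h)
    rcases Nat.lt_or_ge p.val q.val with h | h
    · exact key p q h h1 h2 hnd
    · exact key q p (by omega) h1.symm h2.symm
        (fun hc => hnd ((h2.trans hc).trans h1.symm))
  have hcount : ∀ x : E, t.threadCount x ≤ 2 := by
    intro x
    by_contra hx
    push_neg at hx
    have hx' : 2 < (Finset.univ.filter fun i : ZMod t.L => t.e i = x).card := hx
    obtain ⟨p, hp, q, hq, r, hr, hpq, hpr, hqr⟩ := Finset.two_lt_card.mp hx'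
    simp only [Finset.mem_filter, Finset.mem_univ, true_and] at hp hq hr
    have epq : s(t.v (p - 1), t.v p) = s(t.v (q - 1), t.v q) := by
      rw [← t.compat p, ← t.compat q, hp, hq]
    have epr : s(t.v (p - 1), t.v p) = s(t.v (r - 1), t.v r) := by
      rw [← t.compat p, ← t.compat r, hp, hr]
    by_cases hd : t.v (p - 1) = t.v p
    · have hq' : t.v q = t.v p := by
        rcases Sym2.eq_iff.mp epq with ⟨h1, h2⟩ | ⟨h1, h2⟩
        · exact h2.symm
        · exact h1.symm.trans hd
      have hr' : t.v r = t.v p := by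
        rcases Sym2.eq_iff.mp epr with ⟨h1, h2⟩ | ⟨h1, h2⟩
        · exact h2.symm
        · exact h1.symm.trans hd
      have o1 := hpar p q hpq hq'.symm
      have o2 := hpar p r hpr hr'.symm
      have o3 := hpar q r hqr (hq'.trans hr'.symm)
      omega
    · rcases Sym2.eq_iff.mp epq with ⟨h1, h2⟩ | ⟨h1, h2⟩
      · exact samekill p q hpq h2 h1 hd
      · rcases Sym2.eq_iff.mp epr with ⟨g1, g2⟩ | ⟨g1, g2⟩
        · exact samekill p r hpr g2 g1 hd
        · exact samekill q r hqr (h1.symm.trans g1) (h2.symm.trans g2)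
            (fun hc => hd ((h2.trans hc).trans h1.symm).symm)
  refine ⟨hcount, fun x => ?_⟩
  have habs : |t.altFlow x| = |t.altWeight x| := by
    unfold SeqGraph.CycleTraversal.altFlow SeqGraph.conj
    split_ifs <;> simp
  have hb : |t.altWeight x| ≤ (t.threadCount x : ℤ) := by
    have h1 : |t.altWeight x| ≤
        ∑ i : ZMod t.L, |if t.e i = x then (-1 : ℤ) ^ i.val else 0| :=
      Finset.abs_sum_le_sum_abs _ _
    have h2 : ∀ i : ZMod t.L,
        |if t.e i = x then (-1 : ℤ) ^ i.val else 0| =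
          if t.e i = x then (1 : ℤ) else 0 := by
      intro i
      split_ifs <;> simp
    have h3 : (∑ i : ZMod t.L, if t.e i = x then (1 : ℤ) else 0) =
        ((Finset.univ.filter fun i : ZMod t.L => t.e i = x).card : ℤ) :=
      Finset.sum_boole _ _
    calc |t.altWeight x| ≤ _ := h1
      _ = ∑ i : ZMod t.L, if t.e i = x then (1 : ℤ) else 0 :=
        Finset.sum_congr rfl fun i _ => h2 i
      _ = (t.threadCount x : ℤ) := h3
  have hc := hcount x
  rw [habs]
  calc |t.altWeight x| ≤ (t.threadCount x : ℤ) := hb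
    _ ≤ 2 := by exact_mod_cast hc
end
end

section
/- Let l ≥ 1 and let P be a set of pairs (i, j) of indices in Fin l with i < j that is nested. Let ~ be the equivalence relation on Fin l generated by relating i to j for every (i, j) ∈ P, and consider the quotient cycle graph whose vertices are the ~-classes, with one edge labeled i joining the class of i and the class of i+1 (mod l) for each i ∈ Fin l. Then for any two distinct classes A and B there exist two edge labels p, q ∈ Fin l such that A and B are not connected once the edges labeled p and q are removed: A and B are not related by the reflexive-transitive closure of the relation S, where S(X, Y) holds iff there exists i ∈ Fin l with i ≠ p, i ≠ q and {X, Y} = {class of i, class of (i+1 mod l)}. (Hence merging the vertices of a simple cycle along nested coinciding pairs yields a cactus graph.) -/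
/-- The cyclic successor of an index in `Fin l`. -/
def nxt {l : ℕ} (i : Fin l) : Fin l := ⟨((i : ℕ) + 1) % l, Nat.mod_lt _ i.pos⟩

section Aux
open Relation

/-- If `u ~ w`, `i` lies strictly between `u` and `w`, and `i` is not
equivalent to `u`, then some pair of `P` whose endpoints are equivalent to `u`
straddles `i`. -/
lemma straddle_aux {l : ℕ} {P : Set (Fin l × Fin l)}
    (hlt : ∀ p ∈ P, p.1 < p.2)
    {u w i : Fin l} (h : EqvGen (fun i j : Fin l => (i, j) ∈ P) u w) :
    ¬ EqvGen (fun i j : Fin l => (i, j) ∈ P) u i →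
    ((u < i ∧ i < w) ∨ (w < i ∧ i < u)) →
    ∃ pp ∈ P, pp.1 < i ∧ i < pp.2 ∧
      EqvGen (fun i j : Fin l => (i, j) ∈ P) u pp.1 := by
  induction h with
  | rel c d hcd =>
    intro hni hbet
    rcases hbet with ⟨h1, h2⟩ | ⟨h1, h2⟩
    · exact ⟨(c, d), hcd, h1, h2, EqvGen.refl c⟩
    · exact absurd (h1.trans (h2.trans (hlt _ hcd))) (lt_irrefl _)
  | refl c =>
    intro hni hbet
    rcases hbet with ⟨h1, h2⟩ | ⟨h1, h2⟩ <;>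
      exact absurd (h1.trans h2) (lt_irrefl _)
  | symm c d hcd ih =>
    intro hni hbet
    have hni' : ¬ EqvGen (fun i j : Fin l => (i, j) ∈ P) c i :=
      fun hh => hni ((EqvGen.symm _ _ hcd).trans _ _ _ hh)
    obtain ⟨pp, hpp, h1, h2, h3⟩ := ih hni' hbet.symm
    exact ⟨pp, hpp, h1, h2, (EqvGen.symm _ _ hcd).trans _ _ _ h3⟩
  | trans c d e hcd hde ih1 ih2 =>
    intro hni hbet
    have hnid : ¬ EqvGen (fun i j : Fin l => (i, j) ∈ P) d i :=
      fun hh => hni (hcd.trans _ _ _ hh)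
    rcases lt_trichotomy d i with h | h | h
    · rcases hbet with ⟨h1, h2⟩ | ⟨h1, h2⟩
      · obtain ⟨pp, hpp, g1, g2, g3⟩ := ih2 hnid (Or.inl ⟨h, h2⟩)
        exact ⟨pp, hpp, g1, g2, hcd.trans _ _ _ g3⟩
      · exact ih1 hni (Or.inr ⟨h, h2⟩)
    · exact absurd (h ▸ hcd) hni
    · rcases hbet with ⟨h1, h2⟩ | ⟨h1, h2⟩
      · exact ih1 hni (Or.inl ⟨h1, h⟩)
      · obtain ⟨pp, hpp, g1, g2, g3⟩ := ih2 hnid (Or.inr ⟨h1, h⟩)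
        exact ⟨pp, hpp, g1, g2, hcd.trans _ _ _ g3⟩


/-- A class is absorbed by a closed interval. -/
lemma closed_absorb {l : ℕ} {P : Set (Fin l × Fin l)} {x y : Fin l}
    (hcl : ∀ pp ∈ P, ((x ≤ pp.1 ∧ pp.1 ≤ y) ↔ (x ≤ pp.2 ∧ pp.2 ≤ y)))
    {v w : Fin l} (h : EqvGen (fun i j : Fin l => (i, j) ∈ P) v w) :
    (x ≤ v ∧ v ≤ y) ↔ (x ≤ w ∧ w ≤ y) := by
  induction h with
  | rel c d hcd => exact hcl (c, d) hcd
  | refl c => exact Iff.rfl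
  | symm c d hcd ih => exact ih.symm
  | trans c d e hcd hde ih1 ih2 => exact ih1.trans ih2

/-- The interval hull of the class of `a` is closed. -/
lemma hull_exists {l : ℕ} {P : Set (Fin l × Fin l)}
    (hlt : ∀ p ∈ P, p.1 < p.2)
    (hnested : ¬ ∃ p q : Fin l × Fin l,
      p ∈ P ∧ q ∈ P ∧ p.1 < q.1 ∧ q.1 < p.2 ∧ p.2 < q.2)
    (a : Fin l) :
    ∃ x y : Fin l, EqvGen (fun i j : Fin l => (i, j) ∈ P) a x ∧
      EqvGen (fun i j : Fin l => (i, j) ∈ P) a y ∧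
      (∀ v, EqvGen (fun i j : Fin l => (i, j) ∈ P) a v → x ≤ v ∧ v ≤ y) ∧
      (∀ pp ∈ P, ((x ≤ pp.1 ∧ pp.1 ≤ y) ↔ (x ≤ pp.2 ∧ pp.2 ≤ y))) := by
  classical
  set R : Fin l → Fin l → Prop := fun i j => (i, j) ∈ P with hR
  set C : Finset (Fin l) := Finset.univ.filter (fun v => EqvGen R a v) with hC
  have haC : a ∈ C := by simp [hC, EqvGen.refl]
  have hCne : C.Nonempty := ⟨a, haC⟩
  have hmemC : ∀ v, v ∈ C ↔ EqvGen R a v := by intro v; simp [hC]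
  set x := C.min' hCne with hx
  set y := C.max' hCne with hy
  have hax : EqvGen R a x := (hmemC _).1 (C.min'_mem hCne)
  have hay : EqvGen R a y := (hmemC _).1 (C.max'_mem hCne)
  have hmem : ∀ v, EqvGen R a v → x ≤ v ∧ v ≤ y := fun v hv =>
    ⟨C.min'_le v ((hmemC v).2 hv), C.le_max' v ((hmemC v).2 hv)⟩
  refine ⟨x, y, hax, hay, hmem, ?_⟩
  rintro ⟨i, j⟩ hij
  have hij' : i < j := hlt _ hij
  constructor
  · rintro ⟨h1, h2⟩
    by_cases hj : x ≤ j ∧ j ≤ y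
    · exact hj
    · exfalso
      by_cases hai : EqvGen R a i
      · exact hj (hmem j (hai.trans _ _ _ (EqvGen.rel _ _ hij)))
      have hyj : y < j := by
        rcases not_and_or.1 hj with h | h
        · exact absurd (h1.trans hij'.le) h
        · exact not_le.1 h
      have hxi : x < i := by
        rcases lt_or_eq_of_le h1 with h | h
        · exact h
        · exact absurd (by rw [h] at hax; exact hax : EqvGen R a i) hai
      have hiy : i < y := lt_of_le_of_ne h2 (fun h => hai (by rw [← h] at hay; exact hay))
      have hxy : EqvGen R x y := (EqvGen.symm _ _ hax).trans _ _ _ hay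
      have hxi' : ¬ EqvGen R x i := fun hh => hai (hax.trans _ _ _ hh)
      obtain ⟨pp, hpp, g1, g2, g3⟩ := straddle_aux hlt hxy hxi' (Or.inl ⟨hxi, hiy⟩)
      have hpp2 : pp.2 ≤ y :=
        (hmem pp.2 ((hax.trans _ _ _ g3).trans _ _ _ (EqvGen.rel _ _ hpp))).2
      exact hnested ⟨pp, (i, j), hpp, hij, g1, g2, lt_of_le_of_lt hpp2 hyj⟩
  · rintro ⟨h1, h2⟩
    by_cases hi : x ≤ i ∧ i ≤ y
    · exact hi
    · exfalso
      by_cases haj : EqvGen R a j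
      · exact hi (hmem i (haj.trans _ _ _ (EqvGen.symm _ _ (EqvGen.rel _ _ hij))))
      have hix : i < x := by
        rcases not_and_or.1 hi with h | h
        · exact not_le.1 h
        · exact absurd (hij'.le.trans h2) h
      have hxj : x < j := lt_of_le_of_ne h1 (fun h => haj (by rw [h] at hax; exact hax))
      have hjy : j < y := lt_of_le_of_ne h2 (fun h => haj (by rw [← h] at hay; exact hay))
      have hxy : EqvGen R x y := (EqvGen.symm _ _ hax).trans _ _ _ hay
      have hxj' : ¬ EqvGen R x j := fun hh => haj (hax.trans _ _ _ hh)
      obtain ⟨pp, hpp, g1, g2, g3⟩ := straddle_aux hlt hxy hxj' (Or.inl ⟨hxj, hjy⟩)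
      have hpp1 : x ≤ pp.1 := (hmem pp.1 (hax.trans _ _ _ g3)).1
      exact hnested ⟨(i, j), pp, hij, hpp, lt_of_lt_of_le hix hpp1, g1, g2⟩

/-- Separation: a closed interval containing exactly one of `a`, `b`. -/
lemma separate {l : ℕ} {P : Set (Fin l × Fin l)}
    (hlt : ∀ p ∈ P, p.1 < p.2)
    (hnested : ¬ ∃ p q : Fin l × Fin l,
      p ∈ P ∧ q ∈ P ∧ p.1 < q.1 ∧ q.1 < p.2 ∧ p.2 < q.2)
    {a b : Fin l} (hne : ¬ EqvGen (fun i j : Fin l => (i, j) ∈ P) a b) :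
    ∃ x y : Fin l,
      (∀ pp ∈ P, ((x ≤ pp.1 ∧ pp.1 ≤ y) ↔ (x ≤ pp.2 ∧ pp.2 ≤ y))) ∧
      ¬ ((x ≤ a ∧ a ≤ y) ↔ (x ≤ b ∧ b ≤ y)) := by
  set R : Fin l → Fin l → Prop := fun i j => (i, j) ∈ P with hR
  obtain ⟨xa, ya, haxa, haya, hmema, hcla⟩ := hull_exists hlt hnested a
  obtain ⟨xb, yb, hbxb, hbyb, hmemb, hclb⟩ := hull_exists hlt hnested b
  have ha : xa ≤ a ∧ a ≤ ya := hmema a (EqvGen.refl a)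
  have hb : xb ≤ b ∧ b ≤ yb := hmemb b (EqvGen.refl b)
  by_cases hba : xa ≤ b ∧ b ≤ ya
  · by_cases hab : xb ≤ a ∧ a ≤ yb
    · exfalso
      -- both hulls contain both points: hulls coincide, classes meet
      have h1 : xb ≤ xa ∧ xa ≤ yb := (closed_absorb hclb haxa).1 hab
      have h2 : xa ≤ xb ∧ xb ≤ ya := (closed_absorb hcla hbxb).1 hba
      have hxx : xa = xb := le_antisymm h2.1 h1.1
      exact hne (haxa.trans _ _ _ (EqvGen.symm _ _ (by rw [hxx] at haxa ⊢; exact hbxb)))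
    · exact ⟨xb, yb, hclb, fun h => hab (h.2 hb)⟩
  · exact ⟨xa, ya, hcla, fun h => hba (h.1 ha)⟩


lemma edge_step {l : ℕ} (x y i : Fin l)
    (hp : i.val ≠ (x.val + l - 1) % l) (hq : i ≠ y) :
    ((x ≤ i ∧ i ≤ y) ↔ (x ≤ nxt i ∧ nxt i ≤ y)) := by
  have hl0 : 0 < l := i.pos
  have hq' : i.val ≠ y.val := fun h => hq (Fin.ext h)
  have hxl : x.val < l := x.isLt
  have hyl : y.val < l := y.isLt
  have hil : i.val < l := i.isLt
  have hnxt : (nxt i).val = (i.val + 1) % l := rfl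
  have h1 : (i.val + 1) % l = if i.val + 1 = l then 0 else i.val + 1 := by
    split
    · next h => rw [h, Nat.mod_self]
    · next h => exact Nat.mod_eq_of_lt (by omega)
  have h2 : (x.val + l - 1) % l = if x.val = 0 then l - 1 else x.val - 1 := by
    split
    · next h =>
        have e : x.val + l - 1 = l - 1 := by omega
        rw [e]; exact Nat.mod_eq_of_lt (by omega)
    · next h =>
        have e : x.val + l - 1 = (x.val - 1) + l := by omega
        rw [e, Nat.add_mod_right]
        exact Nat.mod_eq_of_lt (by omega)
  rw [h2] at hp
  simp only [Fin.le_def, hnxt, h1]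
  split at hp <;> split <;> omega

end Aux

/-- Merging the vertices of a simple cycle of length `l` along a nested set
of pairs yields a 2-edge-connected structure: any two distinct classes can be
disconnected by removing two edges of the cycle (hence the quotient is a
cactus graph). -/
theorem stmt_15 (l : ℕ) (hl : 1 ≤ l) (P : Set (Fin l × Fin l))
    (hlt : ∀ p ∈ P, p.1 < p.2)
    (hnested : ¬ ∃ p q : Fin l × Fin l,
      p ∈ P ∧ q ∈ P ∧ p.1 < q.1 ∧ q.1 < p.2 ∧ p.2 < q.2) :
    ∀ A B : Quot (fun i j : Fin l => (i, j) ∈ P), A ≠ B →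
      ∃ p q : Fin l,
        ¬ Relation.ReflTransGen
            (fun X Y : Quot (fun i j : Fin l => (i, j) ∈ P) =>
              ∃ i : Fin l, i ≠ p ∧ i ≠ q ∧
                ((X = Quot.mk (fun i j : Fin l => (i, j) ∈ P) i ∧
                    Y = Quot.mk (fun i j : Fin l => (i, j) ∈ P) (nxt i)) ∨
                  (X = Quot.mk (fun i j : Fin l => (i, j) ∈ P) (nxt i) ∧
                    Y = Quot.mk (fun i j : Fin l => (i, j) ∈ P) i)))
            A B := by
  intro A B hAB
  obtain ⟨a, rfl⟩ := A.exists_rep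
  obtain ⟨b, rfl⟩ := B.exists_rep
  have hne : ¬ Relation.EqvGen (fun i j : Fin l => (i, j) ∈ P) a b :=
    fun h => hAB (Quot.eqvGen_sound h)
  obtain ⟨x, y, hcl, hsep⟩ := separate hlt hnested hne
  set p : Fin l := ⟨(x.val + l - 1) % l, Nat.mod_lt _ hl⟩ with hp
  refine ⟨p, y, fun hreach => ?_⟩
  set S : Quot (fun i j : Fin l => (i, j) ∈ P) → Prop :=
    Quot.lift (fun v => x ≤ v ∧ v ≤ y)
      (fun i j hij => propext (hcl (i, j) hij)) with hS
  have key : ∀ Z, Relation.ReflTransGen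
      (fun X Y : Quot (fun i j : Fin l => (i, j) ∈ P) =>
        ∃ i : Fin l, i ≠ p ∧ i ≠ y ∧
          ((X = Quot.mk (fun i j : Fin l => (i, j) ∈ P) i ∧
              Y = Quot.mk (fun i j : Fin l => (i, j) ∈ P) (nxt i)) ∨
            (X = Quot.mk (fun i j : Fin l => (i, j) ∈ P) (nxt i) ∧
              Y = Quot.mk (fun i j : Fin l => (i, j) ∈ P) i)))
      (Quot.mk _ a) Z → (S (Quot.mk _ a) ↔ S Z) := by
    intro Z h
    induction h with
    | refl => exact Iff.rfl
    | tail hst hrel ih =>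
      obtain ⟨i, hip, hiq, hcase⟩ := hrel
      have hip' : i.val ≠ (x.val + l - 1) % l := fun h => hip (Fin.ext h)
      have hstep : ((x ≤ i ∧ i ≤ y) ↔ (x ≤ nxt i ∧ nxt i ≤ y)) :=
        edge_step x y i hip' hiq
      rcases hcase with ⟨h1, h2⟩ | ⟨h1, h2⟩
      · rw [h1] at ih
        rw [h2]
        exact ih.trans hstep
      · rw [h1] at ih
        rw [h2]
        exact ih.trans hstep.symm
  exact hsep (key _ hreach)
end

section
/- On any sequence graph (with finite vertex and edge sets), the set of simple flows — integer flows arising as alternating flows of synchronized and nested even-length cycle traversals — is finite; equivalently, the set of nonzero minimal integer flows is finite. -/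
open scoped Classical
open Finset

noncomputable section

namespace SeqGraph

variable {V E : Type} [Fintype V] [Fintype E] {G : SeqGraph V E}

private lemma aux_abs (a b : ℤ) (h1 : a.toNat ≤ b.toNat) (h2 : (-a).toNat ≤ (-b).toNat) :
    |b| = |a| + |b - a| := by
  rcases abs_cases a with ⟨e1,_⟩|⟨e1,_⟩ <;> rcases abs_cases b with ⟨e2,_⟩|⟨e2,_⟩ <;>
    rcases abs_cases (b-a) with ⟨e3,_⟩|⟨e3,_⟩ <;> omega

private lemma isFlow_sub {f g : E → ℤ} (hf : G.IsFlow f) (hg : G.IsFlow g) :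
    G.IsFlow (g - f) := by
  intro u
  have h1 := hf u; have h2 := hg u
  have key : ∀ x : E, (if G.seg x then G.mult u x * (g - f) x else 0) =
      (if G.seg x then G.mult u x * g x else 0) - (if G.seg x then G.mult u x * f x else 0) := by
    intro x; by_cases h : G.seg x <;> simp [h, mul_sub]
  have key2 : ∀ x : E, (if G.seg x then 0 else G.mult u x * (g - f) x) =
      (if G.seg x then 0 else G.mult u x * g x) -
        (if G.seg x then 0 else G.mult u x * f x) := by
    intro x; by_cases h : G.seg x <;> simp [h, mul_sub]
  simp only [key, key2, Finset.sum_sub_distrib, h1, h2]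

private lemma length_le (t : G.CycleTraversal) (hs : t.Synchronized) :
    t.L ≤ 2 * Fintype.card V := by
  haveI : NeZero t.L := ⟨t.pos⟩
  have hfib : ∀ a ∈ (Finset.univ.image t.v),
      ((Finset.univ.filter fun i => t.v i = a).card) ≤ 2 := by
    intro a _
    by_contra h
    push_neg at h
    obtain ⟨i, hi, j, hj, k, hk, hij, hik, hjk⟩ := Finset.two_lt_card.mp h
    simp only [Finset.mem_filter, Finset.mem_univ, true_and] at hi hj hk
    obtain ⟨a1, ha1⟩ := hs i j hij (hi.trans hj.symm)
    obtain ⟨a2, ha2⟩ := hs j k hjk (hj.trans hk.symm)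
    obtain ⟨a3, ha3⟩ := hs i k hik (hi.trans hk.symm)
    omega
  have hmain := Finset.card_le_mul_card_image (f := t.v) Finset.univ 2 hfib
  have hc : (Finset.univ : Finset (ZMod t.L)).card = t.L := by
    simp [Finset.card_univ, ZMod.card]
  have himg : (Finset.univ.image t.v).card ≤ Fintype.card V := by
    simpa using Finset.card_le_univ (Finset.univ.image t.v)
  calc t.L = (Finset.univ : Finset (ZMod t.L)).card := hc.symm
    _ ≤ 2 * (Finset.univ.image t.v).card := hmain
    _ ≤ 2 * Fintype.card V := Nat.mul_le_mul_left 2 himg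

private lemma altFlow_abs_le (t : G.CycleTraversal) (x : E) :
    |t.altFlow x| ≤ (t.L : ℤ) := by
  haveI : NeZero t.L := ⟨t.pos⟩
  have hw : |t.altWeight x| ≤ (t.L : ℤ) := by
    calc |t.altWeight x|
        ≤ ∑ i : ZMod t.L, |if t.e i = x then (-1:ℤ) ^ i.val else 0| :=
          Finset.abs_sum_le_sum_abs _ _
      _ ≤ ∑ _i : ZMod t.L, (1:ℤ) := by
          refine Finset.sum_le_sum fun i _ => ?_
          split <;> simp [abs_pow]
      _ = (t.L : ℤ) := by simp [Finset.card_univ, ZMod.card]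
  show |G.conj t.altWeight x| ≤ (t.L : ℤ)
  unfold conj
  split
  · exact hw
  · simpa using hw

end SeqGraph

/-- On a sequence graph with finite vertex and edge sets, the set of simple
flows is finite; equivalently, the set of nonzero minimal integer flows is
finite. -/
theorem stmt_16 (V E : Type) [Fintype V] [Fintype E] (G : SeqGraph V E) :
    {f : E → ℤ | ∃ t : G.CycleTraversal,
        Even t.L ∧ t.Synchronized ∧ t.Nested ∧ t.altFlow = f}.Finite ∧
      {f : E → ℤ | G.IsFlow f ∧ f ≠ 0 ∧ G.MinimalFlow f}.Finite := by
  constructor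
  · -- simple flows: bounded by 2 * card V in each coordinate
    set B : ℤ := 2 * (Fintype.card V : ℤ) with hB
    have hfin : (Set.univ.pi fun _ : E => Set.Icc (-B) B).Finite :=
      Set.Finite.pi fun _ => Set.finite_Icc _ _
    refine hfin.subset ?_
    rintro f ⟨t, _, hsync, _, rfl⟩
    refine Set.mem_pi.mpr fun x _ => ?_
    have h1 := SeqGraph.altFlow_abs_le t x
    have h2 : (t.L : ℤ) ≤ B := by
      have := SeqGraph.length_le t hsync
      rw [hB]; exact_mod_cast this
    exact Set.mem_Icc.mpr (abs_le.mp (h1.trans h2))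
  · -- minimal flows: an antichain in a partially well-ordered set
    set enc : (E → ℤ) → (E × Bool → ℕ) :=
      fun f p => if p.2 then (f p.1).toNat else (-(f p.1)).toNat with henc
    have hinj : Set.InjOn enc {f : E → ℤ | G.IsFlow f ∧ f ≠ 0 ∧ G.MinimalFlow f} := by
      intro f _ g _ h
      funext x
      have h1 := congrFun h (x, true)
      have h2 := congrFun h (x, false)
      simp only [henc, if_pos, Bool.false_eq_true, if_neg] at h1 h2
      simp only [if_true, if_false] at h1 h2
      omega
    refine Set.Finite.of_finite_image ?_ hinj
    have iwo : IsWellOrder ℕ (· < ·) := inferInstance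
    have hpwo : (enc '' {f : E → ℤ | G.IsFlow f ∧ f ≠ 0 ∧ G.MinimalFlow f}).IsPWO :=
      Set.isPWO_of_wellQuasiOrderedLE _
    refine IsAntichain.finite_of_partiallyWellOrderedOn (r := (· ≤ ·)) ?_ hpwo
    rintro a ⟨f, ⟨hfF, hf0, _⟩, rfl⟩ b ⟨g, ⟨hgF, _, hgm⟩, rfl⟩ hne hle
    have hfg : f ≠ g := fun h => hne (by rw [h])
    refine hgm ⟨f, g - f, hfF, SeqGraph.isFlow_sub hfF hgF, hf0, ?_, ?_, ?_⟩
    · intro h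
      exact hfg (sub_eq_zero.mp h).symm
    · funext x; simp
    · show SeqGraph.l1 g = SeqGraph.l1 f + SeqGraph.l1 (g - f)
      unfold SeqGraph.l1
      rw [← Finset.sum_add_distrib]
      refine Finset.sum_congr rfl fun x _ => ?_
      have h1 : enc f (x, true) ≤ enc g (x, true) := hle (x, true)
      have h2 : enc f (x, false) ≤ enc g (x, false) := hle (x, false)
      simp only [henc] at h1 h2
      simpa using SeqGraph.aux_abs (f x) (g x) (by simpa using h1) (by simpa using h2)
end
end
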